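/- For every ν > −1/2 and every z ≥ 0, the Bessel function of the first kind satisfies Poisson's integral representation: J_ν(z) = z^ν / (2^ν √π Γ(ν + 1/2)) · ∫_{−1}^{1} e^{izt} (1 − t²)^{ν − 1/2} dt. -/

import Mathlib

/-- The Bessel function of the first kind of order `ν`, defined by its power series
`J_ν(z) = Σ_{m=0}^∞ (−1)^m / (m! Γ(m+ν+1)) (z/2)^{2m+ν}`. -/
noncomputable def besselJ (ν z : ℝ) : ℝ :=
  ∑' m : ℕ, ((-1) ^ m / ((Nat.factorial m : ℝ) * Real.Gamma ((m : ℝ) + ν + 1))) *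
    (z / 2) ^ (2 * (m : ℝ) + ν)

open MeasureTheory Real Set intervalIntegral

-- real Beta integral
lemma real_beta {a b : ℝ} (ha : 0 < a) (hb : 0 < b) :
    ∫ x in (0:ℝ)..1, x ^ (a-1) * (1-x) ^ (b-1)
      = Real.Gamma a * Real.Gamma b / Real.Gamma (a+b) := by
  have h := Complex.Gamma_mul_Gamma_eq_betaIntegral (s := (a:ℂ)) (t := (b:ℂ))
    (by simpa using ha) (by simpa using hb)
  have hbeta : Complex.betaIntegral (a:ℂ) (b:ℂ)
      = ((∫ x in (0:ℝ)..1, x ^ (a-1) * (1-x) ^ (b-1) : ℝ) : ℂ) := by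
    rw [Complex.betaIntegral, ← intervalIntegral.integral_ofReal]
    apply intervalIntegral.integral_congr
    intro x hx
    rw [uIcc_of_le (by norm_num : (0:ℝ) ≤ 1)] at hx
    obtain ⟨hx0, hx1⟩ := hx
    push_cast
    rw [Complex.ofReal_cpow hx0, Complex.ofReal_cpow (by linarith)]
    push_cast
    ring
  rw [hbeta, ← Complex.ofReal_add, Complex.Gamma_ofReal, Complex.Gamma_ofReal,
    Complex.Gamma_ofReal, ← Complex.ofReal_mul, ← Complex.ofReal_mul] at h
  have h' := Complex.ofReal_inj.mp h
  have hG : Real.Gamma (a+b) ≠ 0 := (Real.Gamma_pos_of_pos (by linarith)).ne'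
  field_simp
  linarith [h']

lemma sq_image : (fun t : ℝ => t^2) '' Ioo 0 1 = Ioo (0:ℝ) 1 := by
  apply Subset.antisymm
  · rintro y ⟨t, ⟨ht0, ht1⟩, rfl⟩
    simp only [mem_Ioo]
    constructor
    · positivity
    · nlinarith
  · rintro y ⟨hy0, hy1⟩
    refine ⟨Real.sqrt y, ⟨Real.sqrt_pos.mpr hy0, ?_⟩, Real.sq_sqrt (le_of_lt hy0)⟩
    have := Real.sqrt_lt_sqrt (le_of_lt hy0) hy1
    rwa [Real.sqrt_one] at this

lemma moment {ν : ℝ} (hν : -1/2 < ν) (m : ℕ) :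
    ∫ t in (0:ℝ)..1, t ^ (2*m) * (1 - t^2) ^ (ν - 1/2)
      = Real.Gamma (m + 1/2) * Real.Gamma (ν + 1/2) / (2 * Real.Gamma (m + ν + 1)) := by
  have ha : (0:ℝ) < m + 1/2 := by positivity
  have hb : (0:ℝ) < ν + 1/2 := by linarith
  have hbeta := real_beta ha hb
  have hsub : ∫ x in (0:ℝ)..1, x ^ ((m:ℝ) + 1/2 - 1) * (1-x) ^ (ν + 1/2 - 1)
      = 2 * ∫ t in (0:ℝ)..1, t ^ (2*m) * (1 - t^2) ^ (ν - 1/2) := by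
    rw [← intervalIntegral.integral_const_mul,
        intervalIntegral.integral_of_le (by norm_num : (0:ℝ) ≤ 1),
        intervalIntegral.integral_of_le (by norm_num : (0:ℝ) ≤ 1),
        MeasureTheory.integral_Ioc_eq_integral_Ioo,
        MeasureTheory.integral_Ioc_eq_integral_Ioo]
    conv_lhs => rw [← sq_image]
    rw [integral_image_eq_integral_abs_deriv_smul measurableSet_Ioo
          (fun x _ => by simpa using (hasDerivAt_pow 2 x).hasDerivWithinAt)
          (fun x hx y hy h => by
            simp only [mem_Ioo] at hx hy
            nlinarith)]
    apply setIntegral_congr_fun measurableSet_Ioo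
    intro t ht
    obtain ⟨ht0, ht1⟩ := ht
    have h1 : (t^2 : ℝ) ^ ((m:ℝ) + 1/2 - 1) = t ^ (2*(m:ℝ) - 1) := by
      rw [← Real.rpow_natCast t 2, ← Real.rpow_mul (le_of_lt ht0)]
      ring_nf
    have h2 : |(2:ℝ) * t| = 2 * t := abs_of_pos (by linarith)
    simp only [smul_eq_mul, pow_one, h2, h1]
    have h4 : ν + 1/2 - 1 = ν - 1/2 := by ring
    have h5 : (2:ℝ) * t * (t ^ (2*(m:ℝ) - 1) * (1 - t^2) ^ (ν - 1/2))
        = 2 * ((t * t ^ (2*(m:ℝ) - 1)) * (1 - t^2) ^ (ν - 1/2)) := by ring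
    have h6 : t * t ^ (2*(m:ℝ) - 1) = t ^ (2*m : ℕ) := by
      have hc : ((2*m : ℕ) : ℝ) = (2*(m:ℝ) - 1) + 1 := by push_cast; ring
      rw [← Real.rpow_natCast t (2*m), hc, Real.rpow_add ht0, Real.rpow_one]
      ring
    rw [h4, h5, h6]
  rw [hbeta] at hsub
  have he : (m:ℝ) + 1/2 + (ν + 1/2) = m + ν + 1 := by ring
  rw [he] at hsub
  have hm : (0:ℝ) ≤ m := Nat.cast_nonneg m
  have hG : 0 < Real.Gamma ((m:ℝ) + ν + 1) := Real.Gamma_pos_of_pos (by linarith)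
  rw [eq_div_iff (mul_pos two_pos hG).ne']
  rw [eq_comm, eq_div_iff hG.ne'] at hsub
  linear_combination hsub

lemma wInt {p : ℝ} (hp : -1 < p) (n : ℕ) :
    IntervalIntegrable (fun t : ℝ => t^n * (1-t^2)^p) volume (-1) 1 := by
  have key : ∀ a b : ℝ, -1 ≤ a → b ≤ 1 → a ≤ b →
      IntervalIntegrable (fun t : ℝ => (1-t)^p) volume a b →
      IntervalIntegrable (fun t : ℝ => (1+t)^p) volume a b →
      (ContinuousOn (fun t : ℝ => (1-t)^p) (Icc a b) ∨
       ContinuousOn (fun t : ℝ => (1+t)^p) (Icc a b)) →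
      IntervalIntegrable (fun t : ℝ => t^n * (1-t^2)^p) volume a b := by
    intro a b ha hb hab hint1 hint2 hcont
    have heq : ∀ t ∈ Ioc a b, t^n * (1-t^2)^p = ((1-t)^p * (1+t)^p) * t^n := by
      intro t ht
      have h1 : (0:ℝ) ≤ 1 - t := by
        rcases ht with ⟨_, h⟩; linarith
      have h2 : (0:ℝ) ≤ 1 + t := by
        rcases ht with ⟨h, _⟩; linarith
      rw [← Real.mul_rpow h1 h2]
      have : (1-t) * (1+t) = 1 - t^2 := by ring
      rw [this]; ring
    have hii : IntervalIntegrable (fun t : ℝ => ((1-t)^p * (1+t)^p) * t^n) volume a b := by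
      have hmul : IntervalIntegrable (fun t : ℝ => (1-t)^p * (1+t)^p) volume a b := by
        rcases hcont with hc | hc
        · exact hint2.continuousOn_mul (hc.mono (by rw [uIcc_of_le hab]))
        · exact hint1.mul_continuousOn (hc.mono (by rw [uIcc_of_le hab]))
      exact hmul.mul_continuousOn (Continuous.continuousOn (by continuity))
    rw [intervalIntegrable_iff, uIoc_of_le hab] at hii ⊢
    exact hii.congr_fun (fun t ht => (heq t ht).symm) measurableSet_Ioc
  have hbase : IntervalIntegrable (fun x : ℝ => x^p) volume 0 2 :=
    intervalIntegrable_rpow' hp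
  have h1 : IntervalIntegrable (fun t : ℝ => (1-t)^p) volume (-1) 1 := by
    have := hbase.comp_sub_left 1
    norm_num at this
    exact this.symm
  have h2 : IntervalIntegrable (fun t : ℝ => (1+t)^p) volume (-1) 1 := by
    have := hbase.comp_sub_right (-1)
    norm_num at this
    simpa [sub_neg_eq_add, add_comm] using this
  have c1 : ContinuousOn (fun t : ℝ => (1-t)^p) (Icc (-1) 0) := by
    apply ContinuousOn.rpow_const (by fun_prop)
    intro t ht
    left
    rcases ht with ⟨_, h⟩
    intro hc; linarith [hc]
  have c2 : ContinuousOn (fun t : ℝ => (1+t)^p) (Icc 0 1) := by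
    apply ContinuousOn.rpow_const (by fun_prop)
    intro t ht
    left
    rcases ht with ⟨h, _⟩
    intro hc; linarith [hc]
  have left : IntervalIntegrable (fun t : ℝ => t^n * (1-t^2)^p) volume (-1) 0 :=
    key (-1) 0 le_rfl (by norm_num) (by norm_num)
      (h1.mono_set (by rw [uIcc_of_le (by norm_num : (-1:ℝ) ≤ 0), uIcc_of_le (by norm_num : (-1:ℝ) ≤ 1)]; exact Icc_subset_Icc le_rfl (by norm_num)))
      (h2.mono_set (by rw [uIcc_of_le (by norm_num : (-1:ℝ) ≤ 0), uIcc_of_le (by norm_num : (-1:ℝ) ≤ 1)]; exact Icc_subset_Icc le_rfl (by norm_num)))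
      (Or.inl c1)
  have right : IntervalIntegrable (fun t : ℝ => t^n * (1-t^2)^p) volume 0 1 :=
    key 0 1 (by norm_num) le_rfl (by norm_num)
      (h1.mono_set (by rw [uIcc_of_le (by norm_num : (0:ℝ) ≤ 1), uIcc_of_le (by norm_num : (-1:ℝ) ≤ 1)]; exact Icc_subset_Icc (by norm_num) le_rfl))
      (h2.mono_set (by rw [uIcc_of_le (by norm_num : (0:ℝ) ≤ 1), uIcc_of_le (by norm_num : (-1:ℝ) ≤ 1)]; exact Icc_subset_Icc (by norm_num) le_rfl))
      (Or.inr c2)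
  exact left.trans right

-- parity
lemma Mval {p : ℝ} (hp : -1 < p) (n : ℕ) :
    ∫ t in (-1:ℝ)..1, t^n * (1-t^2)^p
      = ((-1)^n + 1) * ∫ t in (0:ℝ)..1, t^n * (1-t^2)^p := by
  have hl : IntervalIntegrable (fun t : ℝ => t^n * (1-t^2)^p) volume (-1) 0 :=
    (wInt hp n).mono_set (by
      rw [uIcc_of_le (by norm_num : (-1:ℝ) ≤ 0), uIcc_of_le (by norm_num : (-1:ℝ) ≤ 1)]
      exact Icc_subset_Icc le_rfl (by norm_num))
  have hr : IntervalIntegrable (fun t : ℝ => t^n * (1-t^2)^p) volume 0 1 :=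
    (wInt hp n).mono_set (by
      rw [uIcc_of_le (by norm_num : (0:ℝ) ≤ 1), uIcc_of_le (by norm_num : (-1:ℝ) ≤ 1)]
      exact Icc_subset_Icc (by norm_num) le_rfl)
  rw [← intervalIntegral.integral_add_adjacent_intervals hl hr]
  have hneg : ∫ t in (-1:ℝ)..0, t^n * (1-t^2)^p
      = (-1)^n * ∫ t in (0:ℝ)..1, t^n * (1-t^2)^p := by
    have h := intervalIntegral.integral_comp_neg (a := (0:ℝ)) (b := 1)
      (fun t : ℝ => t^n * (1-t^2)^p)
    simp only [neg_zero] at h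
    rw [← h, ← intervalIntegral.integral_const_mul]
    apply intervalIntegral.integral_congr
    intro x _
    show (-x)^n * (1-(-x)^2)^p = (-1)^n * (x^n * (1-x^2)^p)
    rw [neg_pow, neg_sq]
    ring
  rw [hneg]; ring

-- Gamma duplication
lemma gdup (m : ℕ) : Real.Gamma ((m:ℝ) + 1/2) * (m.factorial : ℝ)
    = ((2*m).factorial : ℝ) * ((4:ℝ)^m)⁻¹ * Real.sqrt π := by
  have h := Real.Gamma_mul_Gamma_add_half ((m:ℝ) + 1/2)
  have h1 : (m:ℝ) + 1/2 + 1/2 = (m:ℝ) + 1 := by ring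
  have h2 : 2 * ((m:ℝ) + 1/2) = ((2*m : ℕ) : ℝ) + 1 := by push_cast; ring
  rw [h1, h2, show (1:ℝ) - (((2*m : ℕ):ℝ) + 1) = -((2*m : ℕ) : ℝ) from by ring,
    Real.Gamma_nat_eq_factorial, Real.Gamma_nat_eq_factorial,
    Real.rpow_neg (by norm_num), Real.rpow_natCast] at h
  rw [h]
  norm_num [pow_mul]

lemma termwise {ν z : ℝ} (hν : -1/2 < ν) (hz : 0 ≤ z) (m : ℕ) :
    ((-1)^m / ((Nat.factorial m : ℝ) * Real.Gamma ((m:ℝ) + ν + 1))) * (z/2) ^ (2*(m:ℝ)+ν)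
    = (z^ν / (2^ν * Real.sqrt π * Real.Gamma (ν + 1/2))) *
      ((-1)^m * z^(2*m) / ((2*m).factorial : ℝ) *
        (Real.Gamma ((m:ℝ)+1/2) * Real.Gamma (ν+1/2) / Real.Gamma ((m:ℝ)+ν+1))) := by
  have hm : (0:ℝ) ≤ m := Nat.cast_nonneg m
  have hG1 : 0 < Real.Gamma ((m:ℝ) + ν + 1) := Real.Gamma_pos_of_pos (by linarith)
  have hG2 : 0 < Real.Gamma (ν + 1/2) := Real.Gamma_pos_of_pos (by linarith)
  have hsπ : 0 < Real.sqrt π := Real.sqrt_pos.mpr Real.pi_pos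
  have hdup := gdup m
  have hfm : (0:ℝ) < (Nat.factorial m : ℝ) := by positivity
  have hf2m : (0:ℝ) < ((2*m).factorial : ℝ) := by positivity
  rcases eq_or_lt_of_le hz with rfl | hz'
  · -- z = 0
    rcases Nat.eq_zero_or_pos m with rfl | hm'
    · rcases eq_or_ne ν 0 with rfl | hν'
      · norm_num [Real.Gamma_one, Real.rpow_zero, Real.Gamma_one_half_eq]
        field_simp
      · rw [show 2*((0:ℕ):ℝ) + ν = ν by push_cast; ring]
        rw [show (0:ℝ)/2 = 0 by norm_num, Real.zero_rpow hν']
        ring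
    · have he : 2*(m:ℝ) + ν ≠ 0 := by
        have : (1:ℝ) ≤ m := by exact_mod_cast hm'
        intro hc; linarith
      rw [show (0:ℝ)/2 = 0 by norm_num, Real.zero_rpow he,
        zero_pow (by omega : 2*m ≠ 0)]
      ring
  · -- z > 0
    have hz2 : (0:ℝ) < z/2 := by linarith
    have hsplit : (z/2) ^ (2*(m:ℝ)+ν) = (z/2)^(2*m : ℕ) * (z/2)^ν := by
      rw [show 2*(m:ℝ) + ν = ((2*m : ℕ):ℝ) + ν by push_cast; ring,
        Real.rpow_add hz2, Real.rpow_natCast]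
    have hdiv : (z/2 : ℝ)^ν = z^ν / 2^ν := Real.div_rpow hz (by norm_num) ν
    have hpow : (z/2 : ℝ)^(2*m : ℕ) = z^(2*m) / 4^m := by
      have h44 : (4:ℝ)^m = 2^(2*m) := by rw [pow_mul]; norm_num
      rw [div_pow, h44]
    rw [hsplit, hdiv, hpow]
    have hΓhalf : Real.Gamma ((m:ℝ)+1/2)
        = ((2*m).factorial : ℝ) * ((4:ℝ)^m)⁻¹ * Real.sqrt π / (m.factorial : ℝ) := by
      field_simp at hdup ⊢
      linarith [hdup]
    rw [hΓhalf]
    have h4 : (0:ℝ) < (4:ℝ)^m := by positivity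
    have h2ν : (0:ℝ) < (2:ℝ)^ν := Real.rpow_pos_of_pos (by norm_num) ν
    have hzν : (0:ℝ) < z^ν := Real.rpow_pos_of_pos hz' ν
    set G1 := Real.Gamma ((m:ℝ) + ν + 1) with hG1def
    set G2 := Real.Gamma (ν + 1/2) with hG2def
    set S := Real.sqrt π with hSdef
    set F1 := (Nat.factorial m : ℝ) with hF1def
    set F2 := ((2*m).factorial : ℝ) with hF2def
    set A := (4:ℝ)^m with hAdef
    set B := (2:ℝ)^ν with hBdef
    set Z := z^ν with hZdef
    field_simp [hfm.ne', hf2m.ne', hG1.ne', hG2.ne', hsπ.ne', h4.ne', h2ν.ne', hzν.ne']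

/-- Poisson's integral representation of the Bessel function: for
`ν > −1/2` and `z ≥ 0`,
`J_ν(z) = z^ν/(2^ν √π Γ(ν+1/2)) ∫_{−1}^1 e^{izt}(1−t²)^{ν−1/2} dt`. -/
theorem bessel_poisson_integral (ν z : ℝ) (hν : -1/2 < ν) (hz : 0 ≤ z) :
    ((besselJ ν z : ℝ) : ℂ) =
      ((z ^ ν / (2 ^ ν * Real.sqrt Real.pi * Real.Gamma (ν + 1/2)) : ℝ) : ℂ) *
        ∫ t in (-1 : ℝ)..1,
          Complex.exp (Complex.I * z * t) * (((1 - t ^ 2) ^ (ν - 1/2) : ℝ) : ℂ) := by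
  have hp : (-1:ℝ) < ν - 1/2 := by linarith
  set μ : Measure ℝ := volume.restrict (Ioc (-1:ℝ) 1) with hμdef
  set F : ℕ → ℝ → ℂ := fun n t =>
    (Complex.I * z * t)^n / (Nat.factorial n : ℂ) * (((1 - t^2) ^ (ν - 1/2) : ℝ) : ℂ)
    with hFdef
  have hFeq : ∀ n t, F n t = ((Complex.I * z)^n / (Nat.factorial n : ℂ)) *
      (((t^n * (1 - t^2) ^ (ν - 1/2) : ℝ)) : ℂ) := by
    intro n t
    simp only [hFdef, mul_pow]
    push_cast
    ring
  have hwint : ∀ n, IntegrableOn (fun t : ℝ => t^n * (1 - t^2) ^ (ν - 1/2))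
      (Ioc (-1:ℝ) 1) volume := fun n => (wInt hp n).1
  have hFint : ∀ n, Integrable (F n) μ := by
    intro n
    have h1 : Integrable (fun t : ℝ => ((t^n * (1 - t^2) ^ (ν - 1/2) : ℝ) : ℂ)) μ :=
      (hwint n).ofReal
    exact (h1.const_mul _).congr (Filter.Eventually.of_forall fun t => (hFeq n t).symm)
  have hwIntOn : IntegrableOn (fun t : ℝ => (1 - t^2) ^ (ν - 1/2)) (Ioc (-1:ℝ) 1) volume := by
    have := hwint 0
    simpa using this
  set C := ∫ t in Ioc (-1:ℝ) 1, (1 - t^2) ^ (ν - 1/2) with hCdef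
  have hwpos : ∀ t ∈ Ioc (-1:ℝ) 1, (0:ℝ) ≤ (1 - t^2) ^ (ν - 1/2) := by
    intro t ht
    apply Real.rpow_nonneg
    nlinarith [ht.1, ht.2]
  have hnorm : ∀ n, (∫ t, ‖F n t‖ ∂μ) ≤ z^n / (Nat.factorial n : ℝ) * C := by
    intro n
    have hle : ∀ t ∈ Ioc (-1:ℝ) 1,
        ‖F n t‖ ≤ z^n / (Nat.factorial n : ℝ) * ((1 - t^2) ^ (ν - 1/2)) := by
      intro t ht
      have hnorm1 : ‖F n t‖ = (|z| * |t|)^n / (Nat.factorial n : ℝ)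
          * |(1 - t^2) ^ (ν - 1/2)| := by
        simp [hFdef, norm_mul, norm_div, norm_pow, Complex.norm_real, abs_mul,
          Complex.norm_natCast]
      rw [hnorm1, abs_of_nonneg (hwpos t ht)]
      have ht1 : |t| ≤ 1 := by
        rw [abs_le]; exact ⟨le_of_lt ht.1, ht.2⟩
      have hzt : |z| * |t| ≤ z := by
        rw [abs_of_nonneg hz]
        nlinarith [abs_nonneg t]
      have hpow : (|z| * |t|)^n ≤ z^n :=
        pow_le_pow_left₀ (by positivity) hzt n
      have hfn : (0:ℝ) < (Nat.factorial n : ℝ) := by positivity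
      exact mul_le_mul_of_nonneg_right ((div_le_div_iff_of_pos_right hfn).mpr hpow) (hwpos t ht)
    calc (∫ t, ‖F n t‖ ∂μ)
        ≤ ∫ t, z^n / (Nat.factorial n : ℝ) * ((1 - t^2) ^ (ν - 1/2)) ∂μ := by
          apply integral_mono_of_nonneg
          · exact Filter.Eventually.of_forall fun t => norm_nonneg _
          · exact hwIntOn.const_mul _
          · exact (ae_restrict_mem measurableSet_Ioc).mono hle
      _ = z^n / (Nat.factorial n : ℝ) * C := by
          rw [MeasureTheory.integral_const_mul, hCdef]
  have hsummable : Summable (fun n => ∫ t, ‖F n t‖ ∂μ) :=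
    Summable.of_nonneg_of_le (fun n => integral_nonneg fun t => norm_nonneg _)
      hnorm ((Real.summable_pow_div_factorial z).mul_right C)
  have hHasSum := MeasureTheory.hasSum_integral_of_summable_integral_norm hFint hsummable
  have hptw : ∀ t : ℝ, (∑' n, F n t)
      = Complex.exp (Complex.I * z * t) * (((1 - t^2) ^ (ν - 1/2) : ℝ) : ℂ) := by
    intro t
    rw [hFdef]
    rw [tsum_mul_right]
    congr 1
    rw [Complex.exp_eq_exp_ℂ, NormedSpace.exp_eq_tsum_div]
  simp only [hptw] at hHasSum
  have hMn : ∀ n, (∫ t, F n t ∂μ) = ((Complex.I*z)^n / (Nat.factorial n : ℂ)) *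
      (((∫ t in Ioc (-1:ℝ) 1, t^n * (1 - t^2) ^ (ν - 1/2)) : ℝ) : ℂ) := by
    intro n
    calc (∫ t, F n t ∂μ)
        = ∫ t, ((Complex.I*z)^n / (Nat.factorial n : ℂ))
            * (((t^n * (1 - t^2) ^ (ν - 1/2) : ℝ)) : ℂ) ∂μ :=
          integral_congr_ae (Filter.Eventually.of_forall fun t => hFeq n t)
      _ = ((Complex.I*z)^n / (Nat.factorial n : ℂ))
            * ∫ t, (((t^n * (1 - t^2) ^ (ν - 1/2) : ℝ)) : ℂ) ∂μ := MeasureTheory.integral_const_mul _ _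
      _ = _ := by
          congr 1
          have h5 := ContinuousLinearMap.integral_comp_comm Complex.ofRealCLM (hwint n)
          simpa using h5
  have hIoc : ∀ n : ℕ, (∫ t in Ioc (-1:ℝ) 1, t^n * (1 - t^2) ^ (ν - 1/2))
      = ∫ t in (-1:ℝ)..1, t^n * (1 - t^2) ^ (ν - 1/2) :=
    fun n => (intervalIntegral.integral_of_le (by norm_num : (-1:ℝ) ≤ 1)).symm
  have hG1 : ∀ m : ℕ, (0:ℝ) < Real.Gamma ((m:ℝ) + ν + 1) := by
    intro m
    apply Real.Gamma_pos_of_pos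
    have : (0:ℝ) ≤ m := Nat.cast_nonneg m
    linarith
  have hMeven : ∀ m : ℕ, (∫ t in Ioc (-1:ℝ) 1, t^(2*m) * (1 - t^2) ^ (ν - 1/2))
      = Real.Gamma ((m:ℝ)+1/2) * Real.Gamma (ν+1/2) / Real.Gamma ((m:ℝ)+ν+1) := by
    intro m
    rw [hIoc, Mval hp, Even.neg_one_pow ⟨m, by ring⟩, moment hν m]
    have hne := (hG1 m).ne'
    field_simp
    ring
  have hModd : ∀ n : ℕ, ¬ Even n →
      (∫ t in Ioc (-1:ℝ) 1, t^n * (1 - t^2) ^ (ν - 1/2)) = 0 := by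
    intro n hn
    rw [hIoc, Mval hp, Odd.neg_one_pow (Nat.not_even_iff_odd.mp hn)]
    ring
  set Sr : ℕ → ℝ := fun m => (-1)^m * z^(2*m) / ((2*m).factorial : ℝ) *
    (Real.Gamma ((m:ℝ)+1/2) * Real.Gamma (ν+1/2) / Real.Gamma ((m:ℝ)+ν+1)) with hSrdef
  have hg2 : ∀ m : ℕ, (∫ t, F (2*m) t ∂μ) = ((Sr m : ℝ) : ℂ) := by
    intro m
    rw [hMn, hMeven]
    have hI2 : (Complex.I * z)^(2*m) = (((-1)^m * z^(2*m) : ℝ) : ℂ) := by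
      rw [mul_pow, pow_mul, Complex.I_sq]
      push_cast
      ring
    rw [hI2, hSrdef]
    push_cast
    ring
  have hg0 : ∀ n, n ∉ Set.range (fun m : ℕ => 2*m) → (∫ t, F n t ∂μ) = 0 := by
    intro n hn
    have hodd : ¬ Even n := by
      rintro ⟨k, hk⟩
      exact hn ⟨k, by show 2*k = n; omega⟩
    rw [hMn, hModd n hodd]
    simp
  have hinj : Function.Injective (fun m : ℕ => 2*m) := fun a b h => by
    have h' : 2*a = 2*b := h
    omega
  have hTsum : HasSum (fun m : ℕ => ((Sr m : ℝ):ℂ))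
      (∫ t, Complex.exp (Complex.I*z*t) * (((1 - t^2) ^ (ν - 1/2) : ℝ) : ℂ) ∂μ) := by
    have h2 := (hinj.hasSum_iff hg0).mpr hHasSum
    have h3 : ((fun n => ∫ t, F n t ∂μ) ∘ (fun m : ℕ => 2*m))
        = fun m : ℕ => ((Sr m : ℝ):ℂ) := by
      funext m
      exact hg2 m
    rwa [h3] at h2
  set T := ∫ t, Complex.exp (Complex.I*z*t) * (((1 - t^2) ^ (ν - 1/2) : ℝ) : ℂ) ∂μ with hTdef
  have hre : HasSum Sr T.re := by
    have := hTsum.mapL Complex.reCLM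
    simpa using this
  have hTre : T = ((T.re : ℝ) : ℂ) := hTsum.unique (Complex.hasSum_ofReal.mpr hre)
  have hbes : besselJ ν z
      = (z^ν / (2^ν * Real.sqrt π * Real.Gamma (ν + 1/2))) * T.re := by
    rw [besselJ, ← hre.tsum_eq, ← tsum_mul_left]
    exact tsum_congr fun m => termwise hν hz m
  rw [intervalIntegral.integral_of_le (by norm_num : (-1:ℝ) ≤ 1)]
  rw [show (∫ t in Ioc (-1:ℝ) 1, Complex.exp (Complex.I*z*t)
      * (((1 - t^2) ^ (ν - 1/2) : ℝ) : ℂ) ∂volume) = T from rfl]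
  rw [hTre, hbes]
  push_cast
  ring
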